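/- At β = 0, W'_0(a-) = W'_0(a+) = ((ρ₂⁻ - ρ₁⁺)/(ρ₂⁻ - ρ₁⁻))(ρ₂⁻e^{-ρ₁⁻a} - ρ₁⁻e^{-ρ₂⁻a}). Moreover, since W'_β(a-) increases in β and W'_β(a+) decreases in β on (-1,1), it follows that W'_β(a-) < W'_β(a+) iff β ∈ (-1,0) and W'_β(a+) < W'_β(a-) iff β ∈ (0,1). -/

import Mathlib

theorem W_deriv_at_a_comparison (q a μp μm : ℝ) (hq : 0 < q) (ha : 0 < a)
    (ρ1m ρ2m ρ1p ρ2p : ℝ)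
    (hρ1m : ρ1m = -(μm + Real.sqrt (μm^2 + 2*q)))
    (hρ2m : ρ2m = -μm + Real.sqrt (μm^2 + 2*q))
    (hρ1p : ρ1p = -(μp + Real.sqrt (μp^2 + 2*q)))
    (hρ2p : ρ2p = -μp + Real.sqrt (μp^2 + 2*q))
    (c₁ c₂ Wam Wap : ℝ → ℝ)
    (hc₁ : ∀ β, c₁ β = ((1+β)*ρ1p - (1-β)*ρ1m) / ((1-β)*(ρ2m - ρ1m)))
    (hc₂ : ∀ β, c₂ β = ((1+β)*ρ2p - (1-β)*ρ2m) / ((1+β)*(ρ2p - ρ1p)))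
    (hWam : ∀ β, Wam β = (1 - c₁ β) * (ρ2m * Real.exp (-ρ1m*a) - ρ1m * Real.exp (-ρ2m*a)))
    (hWap : ∀ β, Wap β =
      ρ2p * (c₁ β * Real.exp (-ρ2m*a) + (1 - c₁ β) * Real.exp (-ρ1m*a)) * (1 - c₂ β)
      - ρ1p * ((1 - c₁ β * c₂ β) * Real.exp (-ρ2m*a)
          - c₂ β * (1 - c₁ β) * Real.exp (-ρ1m*a))) :
    Wam 0 = Wap 0 ∧
    Wam 0 = (ρ2m - ρ1p) / (ρ2m - ρ1m) *
      (ρ2m * Real.exp (-ρ1m*a) - ρ1m * Real.exp (-ρ2m*a)) ∧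
    StrictMonoOn Wam (Set.Ioo (-1 : ℝ) 1) ∧
    StrictAntiOn Wap (Set.Ioo (-1 : ℝ) 1) ∧
    (∀ β ∈ Set.Ioo (-1 : ℝ) 1, Wam β < Wap β ↔ β ∈ Set.Ioo (-1 : ℝ) 0) ∧
    (∀ β ∈ Set.Ioo (-1 : ℝ) 1, Wap β < Wam β ↔ β ∈ Set.Ioo (0 : ℝ) 1) := by
  set sm := Real.sqrt (μm^2 + 2*q) with hsm
  set sp := Real.sqrt (μp^2 + 2*q) with hsp
  have hsm0 : 0 ≤ sm := Real.sqrt_nonneg _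
  have hsp0 : 0 ≤ sp := Real.sqrt_nonneg _
  have hsm2 : sm^2 = μm^2 + 2*q := Real.sq_sqrt (by positivity)
  have hsp2 : sp^2 = μp^2 + 2*q := Real.sq_sqrt (by positivity)
  have hρ2m_pos : 0 < ρ2m := by rw [hρ2m]; nlinarith
  have hρ1m_neg : ρ1m < 0 := by rw [hρ1m]; nlinarith
  have hρ2p_pos : 0 < ρ2p := by rw [hρ2p]; nlinarith
  have hρ1p_neg : ρ1p < 0 := by rw [hρ1p]; nlinarith
  have hD : 0 < ρ2m - ρ1m := by linarith
  have hDp : ρ2p - ρ1p ≠ 0 := ne_of_gt (by linarith)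
  set e1 := Real.exp (-ρ1m*a) with he1
  set e2 := Real.exp (-ρ2m*a) with he2
  have he1p : 0 < e1 := Real.exp_pos _
  have he2p : 0 < e2 := Real.exp_pos _
  set E := ρ2m * e1 - ρ1m * e2 with hE
  have hEpos : 0 < E := by
    have h1 := mul_pos hρ2m_pos he1p
    have h2 := mul_pos (neg_pos.mpr hρ1m_neg) he2p
    rw [hE]; nlinarith
  -- closed forms on (-1,1)
  have hWamf : ∀ β : ℝ, -1 < β → β < 1 →
      Wam β = ((1-β)*ρ2m - (1+β)*ρ1p) / ((1-β)*(ρ2m-ρ1m)) * E := by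
    intro β h1 h2
    have hb1 : (1:ℝ) - β ≠ 0 := by linarith
    have hc : 1 - c₁ β = ((1-β)*ρ2m - (1+β)*ρ1p) / ((1-β)*(ρ2m-ρ1m)) := by
      rw [hc₁, eq_div_iff (by exact mul_ne_zero hb1 hD.ne')]
      field_simp
      ring
    rw [hWam, hc]
  have hWapf : ∀ β : ℝ, -1 < β → β < 1 →
      Wap β = ((1-β)*ρ2m - (1+β)*ρ1p) / ((1+β)*(ρ2m-ρ1m)) * E := by
    intro β h1 h2
    have hb1 : (1:ℝ) - β ≠ 0 := by linarith
    have hb2 : (1:ℝ) + β ≠ 0 := by linarith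
    have hc1v : c₁ β = ((1+β)*ρ1p - (1-β)*ρ1m) / ((1-β)*(ρ2m-ρ1m)) := hc₁ β
    have hc2v : c₂ β = ((1+β)*ρ2p - (1-β)*ρ2m) / ((1+β)*(ρ2p-ρ1p)) := hc₂ β
    rw [hWap, hc1v, hc2v, hE]
    field_simp
    ring
  have hmem0 : (0:ℝ) ∈ Set.Ioo (-1:ℝ) 1 := by constructor <;> norm_num
  have heq0 : Wam 0 = Wap 0 := by
    rw [hWamf 0 (by norm_num) (by norm_num), hWapf 0 (by norm_num) (by norm_num)]
    norm_num
  have hval0 : Wam 0 = (ρ2m - ρ1p) / (ρ2m - ρ1m) * E := by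
    rw [hWamf 0 (by norm_num) (by norm_num)]; norm_num
  have hmono : StrictMonoOn Wam (Set.Ioo (-1 : ℝ) 1) := by
    intro x hx y hy hxy
    rw [hWamf x hx.1 hx.2, hWamf y hy.1 hy.2]
    have hdx : 0 < (1-x)*(ρ2m-ρ1m) := by
      have : 0 < 1 - x := by linarith [hx.2]
      positivity
    have hdy : 0 < (1-y)*(ρ2m-ρ1m) := by
      have : 0 < 1 - y := by linarith [hy.2]
      positivity
    rw [mul_lt_mul_iff_of_pos_right hEpos, div_lt_div_iff₀ hdx hdy]
    have key : ((1-y)*ρ2m - (1+y)*ρ1p) * ((1-x)*(ρ2m-ρ1m))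
        - ((1-x)*ρ2m - (1+x)*ρ1p) * ((1-y)*(ρ2m-ρ1m))
        = 2*((ρ2m-ρ1m)*(-ρ1p)*(y-x)) := by ring
    have hp := mul_pos (mul_pos hD (neg_pos.mpr hρ1p_neg)) (sub_pos.mpr hxy)
    linarith
  have hanti : StrictAntiOn Wap (Set.Ioo (-1 : ℝ) 1) := by
    intro x hx y hy hxy
    rw [hWapf x hx.1 hx.2, hWapf y hy.1 hy.2]
    have hdx : 0 < (1+x)*(ρ2m-ρ1m) := by
      have : 0 < 1 + x := by linarith [hx.1]
      positivity
    have hdy : 0 < (1+y)*(ρ2m-ρ1m) := by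
      have : 0 < 1 + y := by linarith [hy.1]
      positivity
    rw [mul_lt_mul_iff_of_pos_right hEpos, div_lt_div_iff₀ hdy hdx]
    have key : ((1-x)*ρ2m - (1+x)*ρ1p) * ((1+y)*(ρ2m-ρ1m))
        - ((1-y)*ρ2m - (1+y)*ρ1p) * ((1+x)*(ρ2m-ρ1m))
        = 2*((ρ2m-ρ1m)*ρ2m*(y-x)) := by ring
    have hp := mul_pos (mul_pos hD hρ2m_pos) (sub_pos.mpr hxy)
    linarith
  refine ⟨heq0, hval0, hmono, hanti, ?_, ?_⟩
  · intro β hβ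
    constructor
    · intro h
      refine ⟨hβ.1, ?_⟩
      by_contra hb
      push_neg at hb
      rcases eq_or_lt_of_le hb with h0 | h0
      · rw [← h0] at h; rw [heq0] at h; exact lt_irrefl _ h
      · have h1 : Wam 0 < Wam β := hmono hmem0 hβ h0
        have h2 : Wap β < Wap 0 := hanti hmem0 hβ h0
        linarith [heq0]
    · intro h
      have h1 : Wam β < Wam 0 := hmono hβ hmem0 h.2
      have h2 : Wap 0 < Wap β := hanti hβ hmem0 h.2
      linarith [heq0]
  · intro β hβ
    constructor
    · intro h
      refine ⟨?_, hβ.2⟩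
      by_contra hb
      push_neg at hb
      rcases eq_or_lt_of_le hb with h0 | h0
      · rw [h0] at h; rw [heq0] at h; exact lt_irrefl _ h
      · have h1 : Wam β < Wam 0 := hmono hβ hmem0 h0
        have h2 : Wap 0 < Wap β := hanti hβ hmem0 h0
        linarith [heq0]
    · intro h
      have h1 : Wam 0 < Wam β := hmono hmem0 hβ h.1
      have h2 : Wap β < Wap 0 := hanti hmem0 hβ h.1
      linarith [heq0]
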